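/- Let 0 < α ≤ 1, A > 0, B > 0, and set k₁ := A/√(A² + α·B²) and k₂ := B/√(A² + α·B²). Then the quadratic form Q(x,y) := (α + 1 − k₁ − α·k₂)·x² + (α + 1 − k₁ + α·k₂)·y² − 2α·x·y is positive definite: Q(x,y) ≥ 0 for all real x, y, with equality only when x = y = 0. -/

import Mathlib

/-- The quadratic form appearing in the `2C` analysis is positive definite. -/
theorem quadratic_form_posdef (α A B k₁ k₂ : ℝ)
    (hα0 : 0 < α) (hα1 : α ≤ 1) (hA : 0 < A) (hB : 0 < B)
    (hk₁ : k₁ = A / Real.sqrt (A ^ 2 + α * B ^ 2))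
    (hk₂ : k₂ = B / Real.sqrt (A ^ 2 + α * B ^ 2)) :
    (∀ x y : ℝ,
      0 ≤ (α + 1 - k₁ - α * k₂) * x ^ 2 + (α + 1 - k₁ + α * k₂) * y ^ 2 - 2 * α * x * y) ∧
    (∀ x y : ℝ,
      (α + 1 - k₁ - α * k₂) * x ^ 2 + (α + 1 - k₁ + α * k₂) * y ^ 2 - 2 * α * x * y = 0 →
        x = 0 ∧ y = 0) := by
  have hs0 : 0 < A ^ 2 + α * B ^ 2 := by positivity
  have hs : 0 < Real.sqrt (A ^ 2 + α * B ^ 2) := Real.sqrt_pos.mpr hs0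
  have hs2 : Real.sqrt (A ^ 2 + α * B ^ 2) ^ 2 = A ^ 2 + α * B ^ 2 :=
    Real.sq_sqrt hs0.le
  have hk1pos : 0 < k₁ := by rw [hk₁]; positivity
  have hk2pos : 0 < k₂ := by rw [hk₂]; positivity
  have hsum : k₁ ^ 2 + α * k₂ ^ 2 = 1 := by
    rw [hk₁, hk₂]
    field_simp
    exact hs2.symm
  have hk1lt : k₁ < 1 := by
    nlinarith [mul_pos hα0 (pow_pos hk2pos 2), hk1pos]
  have ha : 0 < α + 1 - k₁ - α * k₂ := by
    nlinarith [sq_nonneg (k₁ - k₂), sq_nonneg (k₁ + α * k₂ - (α + 1))]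
  have h1k : 0 < (1 - k₁) ^ 2 := pow_pos (by linarith) 2
  have hdet : α ^ 2 < (α + 1 - k₁ - α * k₂) * (α + 1 - k₁ + α * k₂) := by
    nlinarith [mul_pos (show (0:ℝ) < α + 1 by linarith) h1k]
  constructor
  · intro x y
    nlinarith [sq_nonneg ((α + 1 - k₁ - α * k₂) * x - α * y), sq_nonneg y,
      mul_nonneg (sub_pos.mpr hdet).le (sq_nonneg y)]
  · intro x y h
    have hD : 0 < (α + 1 - k₁ - α * k₂) * (α + 1 - k₁ + α * k₂) - α ^ 2 :=
      sub_pos.mpr hdet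
    have h2 : ((α + 1 - k₁ - α * k₂) * (α + 1 - k₁ + α * k₂) - α ^ 2) * y ^ 2 ≤ 0 := by
      nlinarith [sq_nonneg ((α + 1 - k₁ - α * k₂) * x - α * y)]
    have hy2 : y ^ 2 ≤ 0 := by nlinarith [h2, hD]
    have hy : y = 0 := by
      have : y ^ 2 = 0 := le_antisymm hy2 (sq_nonneg y)
      exact pow_eq_zero_iff two_ne_zero |>.mp this
    subst hy
    have h' : (α + 1 - k₁ - α * k₂) * x ^ 2 = 0 := by ring_nf at h ⊢; linarith
    have hx : x = 0 := by
      rcases mul_eq_zero.mp h' with hc | hc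
      · exact absurd hc (ne_of_gt ha)
      · exact pow_eq_zero_iff two_ne_zero |>.mp hc
    exact ⟨hx, rfl⟩
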